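/- Let p ≥ 1 and 1 ≤ ℓ < d be integers. Let {(V_j, v_j)}_{j=1}^n be a tight p-fusion frame in ℝ^ℓ with bound A_0, and let {(W_i, ω_i)}_{i=1}^m be a tight p-fusion frame in ℝ^d with bound A_1 in which every W_i has dimension ℓ. For each i, let f_i : ℝ^ℓ → ℝ^d be a linear isometry with range W_i, and set V_{i,j} := f_i(V_j) ⊆ W_i. Then the family {(V_{i,j}, ω_i v_j)}_{1≤i≤m, 1≤j≤n} is a tight p-fusion frame in ℝ^d with bound A_0·A_1, i.e. Σ_{i=1}^m Σ_{j=1}^n ω_i v_j ‖P_{V_{i,j}}(x)‖^{2p} = A_0 A_1 ‖x‖^{2p} for all x ∈ ℝ^d. -/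

import Mathlib

open scoped BigOperators

/-- The orthogonal projection onto a subspace `V` of `ℝ^d`, as a linear endomorphism. -/
noncomputable def proj {d : ℕ} (V : Submodule ℝ (EuclideanSpace ℝ (Fin d))) :
    EuclideanSpace ℝ (Fin d) →ₗ[ℝ] EuclideanSpace ℝ (Fin d) :=
  V.subtype ∘ₗ (Submodule.orthogonalProjectionOnto V).toLinearMap


theorem stmt18 {l d : ℕ} (p : ℕ) (hp : 1 ≤ p) (hl : 1 ≤ l) (hld : l < d)
    {n m : ℕ}
    (V : Fin n → Submodule ℝ (EuclideanSpace ℝ (Fin l)))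
    (hVbot : ∀ j, V j ≠ ⊥) (hVtop : ∀ j, V j ≠ ⊤)
    (v : Fin n → ℝ) (hv : ∀ j, 0 < v j)
    (W : Fin m → Submodule ℝ (EuclideanSpace ℝ (Fin d)))
    (hWdim : ∀ i, Module.finrank ℝ (W i) = l)
    (ω : Fin m → ℝ) (hω : ∀ i, 0 < ω i)
    (A₀ : ℝ) (hA₀ : 0 < A₀)
    (h₀ : ∀ y : EuclideanSpace ℝ (Fin l),
      ∑ j, v j * ‖proj (V j) y‖ ^ (2 * p) = A₀ * ‖y‖ ^ (2 * p))
    (A₁ : ℝ) (hA₁ : 0 < A₁)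
    (h₁ : ∀ x : EuclideanSpace ℝ (Fin d),
      ∑ i, ω i * ‖proj (W i) x‖ ^ (2 * p) = A₁ * ‖x‖ ^ (2 * p))
    (f : Fin m → (EuclideanSpace ℝ (Fin l) →ₗᵢ[ℝ] EuclideanSpace ℝ (Fin d)))
    (hf : ∀ i, LinearMap.range (f i).toLinearMap = W i) :
    ∀ x : EuclideanSpace ℝ (Fin d),
      ∑ i, ∑ j, ω i * v j * ‖proj ((V j).map (f i).toLinearMap) x‖ ^ (2 * p)
        = A₀ * A₁ * ‖x‖ ^ (2 * p) := by
  intro x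
  have key : ∀ i : Fin m,
      ∑ j, v j * ‖proj ((V j).map (f i).toLinearMap) x‖ ^ (2 * p)
        = A₀ * ‖proj (W i) x‖ ^ (2 * p) := by
    intro i
    obtain ⟨y, hy⟩ : ∃ y, (f i) y = proj (W i) x := by
      have hmem : proj (W i) x ∈ LinearMap.range (f i).toLinearMap := by
        rw [hf i]; exact (Submodule.orthogonalProjectionOnto (W i) x).2
      exact hmem
    have hnorm : ∀ j, ‖proj ((V j).map (f i).toLinearMap) x‖ = ‖proj (V j) y‖ := by
      intro j
      have hle : (V j).map (f i).toLinearMap ≤ W i := by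
        rw [← hf i]; exact LinearMap.map_le_range
      have h1 : proj ((V j).map (f i).toLinearMap) x
          = proj ((V j).map (f i).toLinearMap) (proj (W i) x) := by
        have := Submodule.orthogonalProjectionOnto_starProjection_of_le hle x
        simp only [proj, LinearMap.coe_comp, Function.comp_apply,
          ContinuousLinearMap.coe_coe, Submodule.coe_subtype]
        exact congrArg _ this.symm
      have h2 : proj ((V j).map (f i).toLinearMap) ((f i) y)
          = (f i) (proj (V j) y) := by
        simp only [proj, LinearMap.coe_comp, Function.comp_apply,
          ContinuousLinearMap.coe_coe, Submodule.coe_subtype]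
        exact ((f i).map_starProjection (V j) y).symm
      rw [h1, ← hy, h2, (f i).norm_map]
    calc ∑ j, v j * ‖proj ((V j).map (f i).toLinearMap) x‖ ^ (2 * p)
        = ∑ j, v j * ‖proj (V j) y‖ ^ (2 * p) := by
          refine Finset.sum_congr rfl fun j _ => ?_; rw [hnorm j]
      _ = A₀ * ‖y‖ ^ (2 * p) := h₀ y
      _ = A₀ * ‖proj (W i) x‖ ^ (2 * p) := by rw [← hy, (f i).norm_map]
  calc ∑ i, ∑ j, ω i * v j * ‖proj ((V j).map (f i).toLinearMap) x‖ ^ (2 * p)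
      = ∑ i, ω i * (A₀ * ‖proj (W i) x‖ ^ (2 * p)) := by
        refine Finset.sum_congr rfl fun i _ => ?_
        rw [← key i, Finset.mul_sum]
        exact Finset.sum_congr rfl fun j _ => by ring
    _ = A₀ * ∑ i, ω i * ‖proj (W i) x‖ ^ (2 * p) := by
        rw [Finset.mul_sum]; exact Finset.sum_congr rfl fun i _ => by ring
    _ = A₀ * A₁ * ‖x‖ ^ (2 * p) := by rw [h₁ x, mul_assoc]
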